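/- Let (κ_n)_{n≥1} be a strictly increasing sequence of positive real numbers, and let (β_n)_{n≥1} be real numbers with ∑_{n=1}^∞ |β_n| < ∞. Define h : [0,∞) → ℝ by h(t) = ∑_{n=1}^∞ β_n e^{−κ_n t}. Then h(t) = 0 for all t ≥ 0 if and only if β_n = 0 for every n. -/

import Mathlib

open Filter Topology

/-- Lemma `lemmaEXPZERO`. Let `(κ_n)` be strictly increasing and
positive, and `(β_n)` absolutely summable. Then `h(t) = ∑ β_n e^{−κ_n t}` vanishes
identically on `[0,∞)` if and only if every `β_n = 0`. -/
theorem stmt12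
    (κ : ℕ → ℝ) (hκpos : ∀ n, 0 < κ n) (hκmono : StrictMono κ)
    (β : ℕ → ℝ) (hβ : Summable fun n => |β n|) :
    (∀ t : ℝ, 0 ≤ t → (∑' n, β n * Real.exp (-(κ n * t))) = 0) ↔ ∀ n, β n = 0 := by
  constructor
  · intro hvanish
    intro n
    induction n using Nat.strong_induction_on with
    | _ n ih =>
      -- Consider g m j = β m * exp ((κ n - κ m) * j) for j : ℕ
      set g : ℕ → ℕ → ℝ := fun j m => β m * Real.exp ((κ n - κ m) * j) with hg
      have hbound : ∀ j : ℕ, ∀ m, ‖g j m‖ ≤ |β m| := by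
        intro j m
        rcases lt_trichotomy m n with hm | hm | hm
        · simp [hg, ih m hm]
        · subst hm; simp [hg, abs_mul, Real.abs_exp]
        · have hexp : Real.exp ((κ n - κ m) * j) ≤ 1 := by
            apply Real.exp_le_one_iff.mpr
            apply mul_nonpos_of_nonpos_of_nonneg
            · linarith [hκmono hm]
            · positivity
          have := abs_nonneg (β m)
          calc ‖g j m‖ = |β m| * |Real.exp ((κ n - κ m) * j)| := by
                simp [hg, abs_mul]
            _ ≤ |β m| * 1 := by
                apply mul_le_mul_of_nonneg_left _ this
                rw [Real.abs_exp]; exact hexp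
            _ = |β m| := by ring
      have hpt : ∀ m, Tendsto (fun j : ℕ => g j m) atTop
          (𝓝 (if m = n then β n else 0)) := by
        intro m
        rcases lt_trichotomy m n with hm | hm | hm
        · simp [hg, ih m hm, hm.ne]
        · subst hm; simp [hg]
        · simp only [hg, if_neg hm.ne']
          have h1 : Tendsto (fun j : ℕ => Real.exp ((κ n - κ m) * j)) atTop (𝓝 0) := by
            apply Real.tendsto_exp_atBot.comp
            apply Tendsto.neg_mul_atTop (by linarith [hκmono hm] : κ n - κ m < 0)
              tendsto_const_nhds
            exact tendsto_natCast_atTop_atTop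
          simpa using (h1.const_mul (β m))
      have hmain : Tendsto (fun j : ℕ => ∑' m, g j m) atTop
          (𝓝 (∑' m, if m = n then β n else 0)) :=
        tendsto_tsum_of_dominated_convergence hβ hpt (Filter.Eventually.of_forall hbound)
      have hzero : ∀ j : ℕ, (∑' m, g j m) = 0 := by
        intro j
        have hsum0 : (∑' m, β m * Real.exp (-(κ m * j))) = 0 :=
          hvanish j (Nat.cast_nonneg j)
        have : (∑' m, g j m) = Real.exp (κ n * j) * ∑' m, β m * Real.exp (-(κ m * j)) := by
          rw [← tsum_mul_left]
          congr 1
          ext m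
          rw [hg]
          simp only
          rw [show (κ n - κ m) * (j:ℝ) = κ n * j + -(κ m * j) by ring, Real.exp_add]
          ring
        rw [this, hsum0, mul_zero]
      have : (∑' m, if m = n then β n else 0) = 0 := by
        have := hmain
        simp only [hzero] at this
        exact (tendsto_const_nhds_iff.mp this).symm
      rwa [tsum_ite_eq n (fun _ => β n)] at this
  · intro h t _
    simp [h]
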